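/- If the equilibrium x̄ satisfies R + Z(x̄) positive definite and ∇²H(x̄) positive definite, then x̄ is a locally asymptotically stable equilibrium of ẋ = (J−R)∇H(x) + G(x)ū, with the shifted Hamiltonian S serving as a strict Lyapunov function on a ball around x̄. -/

import Mathlib

open Matrix Metric

section Auxiliary

variable {n : ℕ}
local notation "E" => EuclideanSpace ℝ (Fin n)

/-- Coercivity of a continuous, 2-homogeneous, positive function. -/
lemma aux_coercive (f : E → ℝ) (hf : Continuous f)
    (hhom : ∀ (t : ℝ) (v : E), f (t • v) = t ^ 2 * f v)
    (hpos : ∀ v : E, v ≠ 0 → 0 < f v) :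
    ∃ c > 0, ∀ v : E, c * ‖v‖ ^ 2 ≤ f v := by
  have hf0 : f 0 = 0 := by simpa using hhom 0 0
  rcases subsingleton_or_nontrivial E with hs | hs
  · exact ⟨1, one_pos, fun v => by rw [Subsingleton.elim v 0]; simp [hf0]⟩
  · obtain ⟨v₀, hv₀, hmin⟩ := (isCompact_sphere (0 : E) 1).exists_isMinOn
      (NormedSpace.sphere_nonempty.mpr zero_le_one) hf.continuousOn
    have hv₀n : ‖v₀‖ = 1 := by simpa using hv₀
    have hv₀ne : v₀ ≠ 0 := by
      intro h; rw [h] at hv₀n; simp at hv₀n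
    refine ⟨f v₀, hpos v₀ hv₀ne, fun v => ?_⟩
    rcases eq_or_ne v 0 with rfl | hv
    · simp [hf0]
    · have hnv : ‖v‖ ≠ 0 := norm_ne_zero_iff.mpr hv
      have hu : (‖v‖⁻¹ • v) ∈ sphere (0 : E) 1 := by
        simp [norm_smul, abs_of_nonneg (inv_nonneg.mpr (norm_nonneg v)),
          inv_mul_cancel₀ hnv]
      have h1 : f v₀ ≤ f (‖v‖⁻¹ • v) := hmin hu
      have h2 : f v = ‖v‖ ^ 2 * f (‖v‖⁻¹ • v) := by
        rw [← hhom, smul_smul, mul_inv_cancel₀ hnv, one_smul]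
      nlinarith [sq_nonneg ‖v‖, norm_nonneg v, sq_abs ‖v‖]

/-- If `φ` has nonpositive derivative on `[a,b]`, then `φ b ≤ φ a`. -/
lemma aux_anti (φ ψ : ℝ → ℝ) (a b : ℝ) (hab : a ≤ b)
    (hd : ∀ t ∈ Set.Icc a b, HasDerivAt φ (ψ t) t)
    (h0 : ∀ t ∈ Set.Ioo a b, ψ t ≤ 0) : φ b ≤ φ a := by
  have := antitoneOn_of_deriv_nonpos (convex_Icc a b)
    (fun t ht => (hd t ht).continuousAt.continuousWithinAt)
    (fun t ht => by
      rw [interior_Icc] at ht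
      exact ((hd t (Set.mem_Icc_of_Ioo ht)).differentiableAt).differentiableWithinAt)
    (fun t ht => by
      rw [interior_Icc] at ht
      rw [(hd t (Set.mem_Icc_of_Ioo ht)).deriv]
      exact h0 t ht)
  exact this (Set.left_mem_Icc.mpr hab) (Set.right_mem_Icc.mpr hab) hab

lemma aux_strict (φ ψ : ℝ → ℝ)
    (hd : ∀ t ∈ Set.Icc (0:ℝ) 1, HasDerivAt φ (ψ t) t)
    (h0 : ∀ t ∈ Set.Ioo (0:ℝ) 1, 0 < ψ t) : φ 0 < φ 1 := by
  have := strictMonoOn_of_deriv_pos (convex_Icc (0:ℝ) 1)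
    (fun t ht => (hd t ht).continuousAt.continuousWithinAt)
    (fun t ht => by
      rw [interior_Icc] at ht
      rw [(hd t (Set.mem_Icc_of_Ioo ht)).deriv]
      exact h0 t ht)
  exact this (Set.left_mem_Icc.mpr zero_le_one) (Set.right_mem_Icc.mpr zero_le_one) one_pos

lemma line_hasDerivAt (xb u : E) (t : ℝ) :
    HasDerivAt (fun s : ℝ => xb + s • u) u t := by
  simpa using ((hasDerivAt_id t).smul_const u).const_add xb

lemma line_mem_ball (xb x : E) (r : ℝ) (hx : x ∈ ball xb r) {t : ℝ}
    (ht : t ∈ Set.Icc (0:ℝ) 1) : xb + t • (x - xb) ∈ ball xb r := by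
  rw [mem_ball, dist_eq_norm] at hx ⊢
  have h : ‖xb + t • (x - xb) - xb‖ = |t| * ‖x - xb‖ := by
    rw [add_sub_cancel_left, norm_smul, Real.norm_eq_abs]
  rw [h, abs_of_nonneg ht.1]
  calc t * ‖x - xb‖ ≤ 1 * ‖x - xb‖ :=
        mul_le_mul_of_nonneg_right ht.2 (norm_nonneg _)
    _ = ‖x - xb‖ := one_mul _
    _ < r := hx

/-- derivative of `t ↦ ⟪g (xb + t•u), u⟫`. -/
lemma inner_line_hasDerivAt (g : E → E) (hg : Differentiable ℝ g) (xb u : E) (t : ℝ) :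
    HasDerivAt (fun s : ℝ => (inner ℝ (g (xb + s • u)) u : ℝ))
      (inner ℝ (fderiv ℝ g (xb + t • u) u) u) t := by
  have h1 : HasDerivAt (fun s : ℝ => g (xb + s • u))
      (fderiv ℝ g (xb + t • u) u) t :=
    (hg (xb + t • u)).hasFDerivAt.comp_hasDerivAt t (line_hasDerivAt xb u t)
  have h2 := (HasDerivAt.inner ℝ h1 (hasDerivAt_const t u))
  simpa using h2

/-- Strong monotonicity of a gradient field from a Hessian lower bound on a ball. -/
lemma grad_strong_mono (g : E → E) (hg : Differentiable ℝ g) (xb : E) (r c : ℝ)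
    (hc : ∀ y ∈ ball xb r, ∀ v : E, c * ‖v‖ ^ 2 ≤ (inner ℝ v (fderiv ℝ g y v) : ℝ))
    (x : E) (hx : x ∈ ball xb r) :
    c * ‖x - xb‖ ^ 2 ≤ (inner ℝ (g x - g xb) (x - xb) : ℝ) := by
  set u := x - xb with hu
  have key : ∀ t ∈ Set.Icc (0:ℝ) 1,
      HasDerivAt (fun s : ℝ => c * (s * ‖u‖ ^ 2) - (inner ℝ (g (xb + s • u)) u : ℝ))
        (c * ‖u‖ ^ 2 - (inner ℝ (fderiv ℝ g (xb + t • u) u) u : ℝ)) t := by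
    intro t _
    have := (((hasDerivAt_id t).mul_const (‖u‖ ^ 2)).const_mul c).sub
      (inner_line_hasDerivAt g hg xb u t)
    simp only [one_mul] at this
    exact this
  have hmono := aux_anti _ _ 0 1 zero_le_one key (fun t ht => by
    have hmem : xb + t • u ∈ ball xb r := line_mem_ball xb x r hx (Set.mem_Icc_of_Ioo ht)
    have h3 := hc _ hmem u
    rw [real_inner_comm] at h3
    linarith)
  simp only [zero_mul, mul_zero, zero_sub, one_mul, mul_one] at hmono
  have h0 : xb + (0:ℝ) • u = xb := by simp
  have h1 : xb + (1:ℝ) • u = x := by simp [hu]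
  rw [h0, h1] at hmono
  rw [inner_sub_left]
  linarith

/-- Positivity of a function with zero gradient at center & strongly monotone gradient. -/
lemma S_pos_aux (S : E → ℝ) (g : E → E) (hg : ∀ x : E, HasGradientAt S (g x) x)
    (xb : E) (r c : ℝ) (hcpos : 0 < c)
    (hmono : ∀ x ∈ ball xb r, c * ‖x - xb‖ ^ 2 ≤ (inner ℝ (g x - g xb) (x - xb) : ℝ))
    (hgxb : g xb = 0) (x : E) (hx : x ∈ ball xb r) (hne : x ≠ xb) : S xb < S x := by
  set u := x - xb with hu
  have hune : u ≠ 0 := sub_ne_zero_of_ne hne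
  have key : ∀ t ∈ Set.Icc (0:ℝ) 1,
      HasDerivAt (fun s : ℝ => S (xb + s • u)) (inner ℝ (g (xb + t • u)) u : ℝ) t := by
    intro t _
    have h1 := ((hg (xb + t • u)).hasFDerivAt).comp_hasDerivAt t (line_hasDerivAt xb u t)
    simp only [InnerProductSpace.toDual_apply_apply] at h1
    exact h1
  have hpos : ∀ t ∈ Set.Ioo (0:ℝ) 1, 0 < (inner ℝ (g (xb + t • u)) u : ℝ) := by
    intro t ht
    have hmem : xb + t • u ∈ ball xb r := line_mem_ball xb x r hx (Set.mem_Icc_of_Ioo ht)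
    have h2 := hmono _ hmem
    have h3 : xb + t • u - xb = t • u := by abel
    rw [h3, hgxb, sub_zero, inner_smul_right, norm_smul] at h2
    have hnu : 0 < ‖u‖ := norm_pos_iff.mpr hune
    have ht0 : 0 < t := ht.1
    have h4 : c * (t * ‖u‖) ^ 2 ≤ t * (inner ℝ (g (xb + t • u)) u : ℝ) := by
      simpa [Real.norm_eq_abs, abs_of_pos ht0] using h2
    nlinarith [mul_pos hcpos (mul_pos (mul_pos ht0 hnu) (mul_pos ht0 hnu))]
  have := aux_strict _ _ key hpos
  have h0 : xb + (0:ℝ) • u = xb := by simp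
  have h1 : xb + (1:ℝ) • u = x := by simp [hu]
  rw [h0, h1] at this
  exact this

lemma lyap_core (xb : E) (S D : E → ℝ) (r : ℝ)
    (hScont : Continuous S) (hS0 : S xb = 0)
    (hSpos : ∀ x ∈ closedBall xb r, x ≠ xb → 0 < S x)
    (hDle : ∀ x ∈ closedBall xb r, D x ≤ 0)
    (ε : ℝ) (hε : 0 < ε) (hεr : ε ≤ r) :
    ∃ δ > 0, δ ≤ ε ∧ ∀ γ : ℝ → E,
      (∀ t : ℝ, 0 ≤ t → ContinuousAt γ t) →
      (∀ t : ℝ, 0 ≤ t → HasDerivAt (fun s => S (γ s)) (D (γ t)) t) →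
      γ 0 ∈ ball xb δ → ∀ t : ℝ, 0 ≤ t → γ t ∈ ball xb ε := by
  rcases subsingleton_or_nontrivial E with hs | hs
  · exact ⟨ε, hε, le_refl _, fun γ _ _ _ t _ => by
      rw [mem_ball, Subsingleton.elim (γ t) xb, dist_self]; exact hε⟩
  obtain ⟨v₀, hv₀, hmin⟩ := (isCompact_sphere xb ε).exists_isMinOn
    (NormedSpace.sphere_nonempty.mpr hε.le) hScont.continuousOn
  have hv₀d : dist v₀ xb = ε := hv₀
  have hv₀cb : v₀ ∈ closedBall xb r := by rw [mem_closedBall, hv₀d]; exact hεr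
  have hv₀ne : v₀ ≠ xb := by intro h; rw [h, dist_self] at hv₀d; linarith
  set m := S v₀ with hm
  have hmpos : 0 < m := hSpos v₀ hv₀cb hv₀ne
  have hcS : ContinuousAt S xb := hScont.continuousAt
  rw [Metric.continuousAt_iff] at hcS
  obtain ⟨δ₀, hδ₀, hδ₀p⟩ := hcS m hmpos
  refine ⟨min δ₀ ε, lt_min hδ₀ hε, min_le_right _ _, fun γ hγc hγd hγ0 t ht => ?_⟩
  by_contra hbad
  set f : ℝ → ℝ := fun s => dist (γ s) xb with hf
  set B : Set ℝ := {s : ℝ | 0 ≤ s ∧ ε ≤ f s} with hB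
  have hBne : B.Nonempty := ⟨t, ht, by rwa [mem_ball, not_lt] at hbad⟩
  have hBbd : BddBelow B := ⟨0, fun s hs => hs.1⟩
  set T := sInf B with hTdef
  have hT0 : 0 ≤ T := le_csInf hBne (fun b hb => hb.1)
  have hcf : ContinuousAt f T := (hγc T hT0).dist continuousAt_const
  have hfT : ε ≤ f T := by
    have h1 : T ∈ closure B := csInf_mem_closure hBne hBbd
    have h3 : f T ∈ closure (f '' B) := mem_closure_image hcf h1
    have h4 : f '' B ⊆ Set.Ici ε := by rintro _ ⟨s, hs, rfl⟩; exact hs.2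
    have h5 := (closure_mono h4) h3
    rwa [closure_Ici] at h5
  have hγ0d : f 0 < min δ₀ ε := by rwa [mem_ball] at hγ0
  have hTpos : 0 < T := by
    rcases eq_or_lt_of_le hT0 with h | h
    · exfalso
      rw [← h] at hfT
      have := lt_of_lt_of_le hγ0d (min_le_right δ₀ ε)
      linarith
    · exact h
  have hlt : ∀ s, 0 ≤ s → s < T → f s < ε := by
    intro s hs0 hsT
    by_contra h
    exact (notMem_of_lt_csInf hsT hBbd) ⟨hs0, not_lt.mp h⟩
  have hfTle : f T ≤ ε := by
    have h5 : Filter.Tendsto f (nhdsWithin T (Set.Iio T)) (nhds (f T)) :=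
      hcf.continuousWithinAt.tendsto
    have h6 : ∀ᶠ s in nhdsWithin T (Set.Iio T), f s ≤ ε := by
      have h7 : Set.Ioi (0:ℝ) ∈ nhdsWithin T (Set.Iio T) :=
        nhdsWithin_le_nhds (Ioi_mem_nhds hTpos)
      filter_upwards [h7, self_mem_nhdsWithin] with s hs1 hs2
      exact (hlt s (le_of_lt hs1) hs2).le
    exact le_of_tendsto h5 h6
  have hγT : γ T ∈ sphere xb ε := by
    rw [mem_sphere]; exact le_antisymm hfTle hfT
  have hmem : ∀ s ∈ Set.Icc (0:ℝ) T, γ s ∈ closedBall xb r := by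
    intro s hs
    rcases lt_or_eq_of_le hs.2 with h | h
    · exact mem_closedBall.mpr (le_trans (hlt s hs.1 h).le hεr)
    · rw [h]; exact mem_closedBall.mpr (le_trans hfTle hεr)
  have hanti := aux_anti (fun s => S (γ s)) (fun s => D (γ s)) 0 T hT0
    (fun s hs => hγd s hs.1) (fun s hs => hDle _ (hmem s (Set.mem_Icc_of_Ioo hs)))
  have h8 : m ≤ S (γ T) := hmin hγT
  have h9 : S (γ 0) < m := by
    have h10 := hδ₀p (show dist (γ 0) xb < δ₀ from lt_of_lt_of_le hγ0d (min_le_left _ _))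
    rw [hS0, Real.dist_0_eq_abs] at h10
    calc S (γ 0) ≤ |S (γ 0)| := le_abs_self _
      _ < m := h10
  linarith

lemma lyap_attract (xb : E) (S D : E → ℝ) (r : ℝ) (hr : 0 < r)
    (hScont : Continuous S) (hS0 : S xb = 0)
    (hSpos : ∀ x ∈ closedBall xb r, x ≠ xb → 0 < S x)
    (hDcont : ContinuousOn D (closedBall xb r))
    (hDneg : ∀ x ∈ closedBall xb r, x ≠ xb → D x < 0) (hD0 : D xb = 0) :
    ∃ δ > 0, ∀ γ : ℝ → E,
      (∀ t : ℝ, 0 ≤ t → ContinuousAt γ t) →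
      (∀ t : ℝ, 0 ≤ t → HasDerivAt (fun s => S (γ s)) (D (γ t)) t) →
      γ 0 ∈ ball xb δ → Filter.Tendsto γ Filter.atTop (nhds xb) := by
  have hDle : ∀ x ∈ closedBall xb r, D x ≤ 0 := fun x hx => by
    rcases eq_or_ne x xb with rfl | h
    · exact le_of_eq hD0
    · exact (hDneg x hx h).le
  obtain ⟨δ, hδ, hδε, hinv⟩ := lyap_core xb S D r hScont hS0 hSpos hDle r hr le_rfl
  refine ⟨δ, hδ, fun γ hγc hγd hγ0 => ?_⟩
  have hball : ∀ t : ℝ, 0 ≤ t → γ t ∈ ball xb r := hinv γ hγc hγd hγ0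
  have hcb : ∀ t : ℝ, 0 ≤ t → γ t ∈ closedBall xb r :=
    fun t ht => ball_subset_closedBall (hball t ht)
  have hSnonneg : ∀ x ∈ closedBall xb r, 0 ≤ S x := fun x hx => by
    rcases eq_or_ne x xb with rfl | h
    · exact le_of_eq hS0.symm
    · exact (hSpos x hx h).le
  have ganti : ∀ s t : ℝ, 0 ≤ s → s ≤ t → S (γ t) ≤ S (γ s) := by
    intro s t hs hst
    exact aux_anti _ (fun u => D (γ u)) s t hst (fun u hu => hγd u (le_trans hs hu.1))
      (fun u hu => hDle _ (hcb u (le_trans hs hu.1.le)))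
  set g' : ℝ → ℝ := fun t => S (γ (max t 0)) with hg'
  have hg'anti : Antitone g' := fun s t hst =>
    ganti (max s 0) (max t 0) (le_max_right _ _) (max_le_max hst le_rfl)
  have hg'bdd : BddBelow (Set.range g') :=
    ⟨0, by rintro _ ⟨t, rfl⟩; exact hSnonneg _ (hcb _ (le_max_right _ _))⟩
  set L := ⨅ t, g' t with hLdef
  have hLtend : Filter.Tendsto g' Filter.atTop (nhds L) := tendsto_atTop_ciInf hg'anti hg'bdd
  have hgtend : Filter.Tendsto (fun t => S (γ t)) Filter.atTop (nhds L) := by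
    apply hLtend.congr'
    filter_upwards [Filter.eventually_ge_atTop (0:ℝ)] with t ht
    rw [hg']
    simp only [max_eq_left ht]
  have hgeL : ∀ t : ℝ, 0 ≤ t → L ≤ S (γ t) := by
    intro t ht
    have h1 := ciInf_le hg'bdd t
    rw [hg'] at h1
    simp only [max_eq_left ht] at h1
    exact h1
  have hL0 : 0 ≤ L := le_ciInf (fun t => hSnonneg _ (hcb _ (le_max_right _ _)))
  have hLeq : L = 0 := by
    by_contra hLne
    have hLpos : 0 < L := lt_of_le_of_ne hL0 (Ne.symm hLne)
    set K := closedBall xb r ∩ S ⁻¹' (Set.Ici L) with hK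
    have hKcomp : IsCompact K :=
      (isCompact_closedBall xb r).inter_right (isClosed_Ici.preimage hScont)
    have hKne : K.Nonempty := ⟨γ 0, hcb 0 le_rfl, hgeL 0 le_rfl⟩
    obtain ⟨x₀, hx₀K, hx₀max⟩ := hKcomp.exists_isMaxOn hKne (hDcont.mono Set.inter_subset_left)
    have hx₀ne : x₀ ≠ xb := by
      intro h
      have h2 := hx₀K.2
      rw [h, Set.mem_preimage, hS0] at h2
      exact absurd (Set.mem_Ici.mp h2) (not_le.mpr hLpos)
    have hm' : D x₀ < 0 := hDneg x₀ hx₀K.1 hx₀ne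
    have hmemK : ∀ t : ℝ, 0 ≤ t → γ t ∈ K := fun t ht => ⟨hcb t ht, hgeL t ht⟩
    set T := (S (γ 0) + 1) / (-D x₀) with hT
    have hS00 : 0 ≤ S (γ 0) := hSnonneg _ (hcb 0 le_rfl)
    have hTpos : 0 < T := div_pos (by linarith) (by linarith)
    have hdecay := aux_anti (fun s => S (γ s) + (-D x₀) * s)
      (fun s => D (γ s) + (-D x₀)) 0 T hTpos.le
      (fun s hs => by
        have h3 := (hγd s hs.1).add (((hasDerivAt_id s).const_mul (-D x₀)))
        simp only [mul_one] at h3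
        exact h3)
      (fun s hs => by
        have h4 : D (γ s) ≤ D x₀ := hx₀max (hmemK s hs.1.le)
        show D (γ s) + -D x₀ ≤ 0
        linarith)
    have h5 : (-D x₀) * T = S (γ 0) + 1 := by
      rw [hT, mul_div_cancel₀ _ (by linarith : -D x₀ ≠ 0)]
    have h6 : 0 ≤ S (γ T) := hSnonneg _ (hcb T hTpos.le)
    simp only [mul_zero, add_zero] at hdecay
    rw [h5] at hdecay
    linarith
  rw [Metric.tendsto_atTop]
  intro η hη
  rcases (closedBall xb r ∩ (ball xb η)ᶜ).eq_empty_or_nonempty with hKe | hKne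
  · refine ⟨0, fun t ht => ?_⟩
    by_contra h2
    have h3 : γ t ∈ closedBall xb r ∩ (ball xb η)ᶜ :=
      ⟨hcb t ht, by simpa [mem_ball] using h2⟩
    rw [hKe] at h3
    exact h3
  · have hK'comp : IsCompact (closedBall xb r ∩ (ball xb η)ᶜ) :=
      (isCompact_closedBall xb r).inter_right isOpen_ball.isClosed_compl
    obtain ⟨y₀, hy₀K, hy₀min⟩ := hK'comp.exists_isMinOn hKne hScont.continuousOn
    have hy₀ne : y₀ ≠ xb := by
      intro h
      have h2 := hy₀K.2
      rw [h] at h2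
      exact h2 (mem_ball_self hη)
    have hcpos : 0 < S y₀ := hSpos y₀ hy₀K.1 hy₀ne
    have hev : ∀ᶠ t in Filter.atTop, S (γ t) < S y₀ := by
      rw [hLeq] at hgtend
      exact hgtend.eventually (gt_mem_nhds hcpos)
    rw [Filter.eventually_atTop] at hev
    obtain ⟨N, hN⟩ := hev
    refine ⟨max N 0, fun t ht => ?_⟩
    by_contra h2
    have h3 : γ t ∈ closedBall xb r ∩ (ball xb η)ᶜ :=
      ⟨hcb t (le_trans (le_max_right N 0) ht), by simpa [mem_ball] using h2⟩
    have h4 : S y₀ ≤ S (γ t) := hy₀min h3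
    have h5 := hN t (le_trans (le_max_left N 0) ht)
    linarith

lemma skew_quad_zero (J : Matrix (Fin n) (Fin n) ℝ) (hJ : Jᵀ = -J) (v : Fin n → ℝ) :
    v ⬝ᵥ (J *ᵥ v) = 0 := by
  have h1 : ∀ i j, J i j = -J j i := by
    intro i j
    have := congrFun (congrFun hJ j) i
    simpa [Matrix.transpose_apply] using this
  have h2 : v ⬝ᵥ (J *ᵥ v) = ∑ i, ∑ j, v i * (J i j * v j) := by
    simp [Matrix.mulVec, dotProduct, Finset.mul_sum]
  have h3 : ∑ i, ∑ j, v i * (J i j * v j) = -∑ i, ∑ j, v i * (J i j * v j) := by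
    conv_lhs => rw [Finset.sum_comm]
    rw [← Finset.sum_neg_distrib]
    apply Finset.sum_congr rfl
    intro i _
    rw [← Finset.sum_neg_distrib]
    apply Finset.sum_congr rfl
    intro j _
    rw [h1 j i]
    ring
  linarith [h2, h3]

end Auxiliary

set_option maxHeartbeats 2000000 in
theorem local_asymptotic_stability (n : ℕ)
    (J R : Matrix (Fin n) (Fin n) ℝ) (hJ : Jᵀ = -J) (hR : R.PosSemidef)
    (H : EuclideanSpace ℝ (Fin n) → ℝ) (hH : ContDiff ℝ 2 H)
    (I : Set (Fin n)) [DecidablePred (· ∈ I)]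
    (ubar : Fin n → ℝ) (hu : ∀ i, i ∈ I ↔ ubar i = 0)
    (xbar : EuclideanSpace ℝ (Fin n)) (hxbar : ∀ i ∉ I, 0 < gradient H xbar i)
    (G : EuclideanSpace ℝ (Fin n) → Matrix (Fin n) (Fin n) ℝ)
    (hG : ∀ x, G x = Matrix.diagonal (fun i => if i ∈ I then 0 else (gradient H x i)⁻¹))
    (F : EuclideanSpace ℝ (Fin n) → EuclideanSpace ℝ (Fin n))
    (hF : ∀ x, F x = fun i => ((J - R) *ᵥ (fun j => gradient H x j) + G x *ᵥ ubar) i)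
    (heq : F xbar = 0)
    (hZpos : (R + G xbar * Matrix.diagonal ubar * G xbar).PosDef)
    (hhess : ∀ v : EuclideanSpace ℝ (Fin n), v ≠ 0 →
      0 < (inner ℝ v (fderiv ℝ (gradient H) xbar v) : ℝ)) :
    let S : EuclideanSpace ℝ (Fin n) → ℝ :=
      fun x => H x - (inner ℝ (x - xbar) (gradient H xbar) : ℝ) - H xbar
    -- S is a strict Lyapunov function on a ball around x̄
    (∃ ε > 0, ∀ x ∈ Metric.ball xbar ε, x ≠ xbar →
        0 < S x ∧ (inner ℝ (gradient S x) (F x) : ℝ) < 0) ∧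
    -- Lyapunov stability
    (∀ ε > 0, ∃ δ > 0, ∀ γ : ℝ → EuclideanSpace ℝ (Fin n),
        (∀ t : ℝ, 0 ≤ t → HasDerivAt γ (F (γ t)) t) →
        γ 0 ∈ Metric.ball xbar δ → ∀ t : ℝ, 0 ≤ t → γ t ∈ Metric.ball xbar ε) ∧
    -- local attractivity
    (∃ δ > 0, ∀ γ : ℝ → EuclideanSpace ℝ (Fin n),
        (∀ t : ℝ, 0 ≤ t → HasDerivAt γ (F (γ t)) t) →
        γ 0 ∈ Metric.ball xbar δ →
        Filter.Tendsto γ Filter.atTop (nhds xbar)) := by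
  intro S
  -- basic differentiability facts
  have hH1 : Differentiable ℝ H := hH.differentiable (by norm_num)
  have hgrad1 : ContDiff ℝ 1 (gradient H) := by
    have h1 : ContDiff ℝ 1 (fderiv ℝ H) := hH.fderiv_right (by norm_num)
    exact ((InnerProductSpace.toDual ℝ _).symm.contDiff).comp h1
  have hgdiff : Differentiable ℝ (gradient H) := hgrad1.differentiable one_ne_zero
  have hgcont : Continuous (gradient H) := hgrad1.continuous
  set b : EuclideanSpace ℝ (Fin n) := gradient H xbar with hb
  have hproj : ∀ i : Fin n, Continuous fun x : EuclideanSpace ℝ (Fin n) => gradient H x i :=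
    fun i => (EuclideanSpace.proj i).continuous.comp hgcont
  have hnormsq : ∀ v : EuclideanSpace ℝ (Fin n), ‖v‖ ^ 2 = ∑ i, v i ^ 2 := by
    intro v
    rw [EuclideanSpace.norm_eq, Real.sq_sqrt (by positivity)]
    simp [Real.norm_eq_abs, sq_abs]
  have hinner : ∀ v w : EuclideanSpace ℝ (Fin n), (inner ℝ v w : ℝ) = ∑ i, v i * w i := by
    intro v w
    rw [PiLp.inner_apply]
    simp [RCLike.inner_apply, conj_trivial]
    exact Finset.sum_congr rfl fun i _ => mul_comm _ _
  -- gradient of S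
  have hSgrad : ∀ x : EuclideanSpace ℝ (Fin n), HasGradientAt S (gradient H x - b) x := by
    intro x
    show HasGradientAt (fun y => H y - (inner ℝ (y - xbar) b : ℝ) - H xbar) (gradient H x - b) x
    have h1 : HasFDerivAt H ((InnerProductSpace.toDual ℝ _) (gradient H x)) x :=
      (hH1 x).hasGradientAt.hasFDerivAt
    have h2 : HasFDerivAt (fun y : EuclideanSpace ℝ (Fin n) => (inner ℝ (y - xbar) b : ℝ))
        ((InnerProductSpace.toDual ℝ _) b) x := by
      have h3 : (fun y : EuclideanSpace ℝ (Fin n) => (inner ℝ (y - xbar) b : ℝ))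
          = fun y : EuclideanSpace ℝ (Fin n) => (inner ℝ b y : ℝ) - (inner ℝ b xbar : ℝ) := by
        funext y
        rw [inner_sub_left, real_inner_comm y b, real_inner_comm xbar b]
      rw [h3]
      exact (((InnerProductSpace.toDual ℝ _) b).hasFDerivAt).sub_const _
    have h4 := (h1.sub h2).sub_const (H xbar)
    rw [hasGradientAt_iff_hasFDerivAt, map_sub]
    exact h4
  have hSg : ∀ x : EuclideanSpace ℝ (Fin n), gradient S x = gradient H x - b :=
    fun x => (hSgrad x).gradient
  have hScont : Continuous S := by
    show Continuous (fun y => H y - (inner ℝ (y - xbar) b : ℝ) - H xbar)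
    exact ((hH1.continuous.sub
      ((continuous_id.sub continuous_const).inner continuous_const)).sub continuous_const)
  have hS0 : S xbar = 0 := by
    show H xbar - (inner ℝ (xbar - xbar) b : ℝ) - H xbar = 0
    simp
  -- Hessian coercivity
  set A := fderiv ℝ (gradient H) xbar with hA
  obtain ⟨cH, hcH, hcHle⟩ := aux_coercive (fun v => (inner ℝ v (A v) : ℝ))
    (continuous_id.inner A.continuous)
    (fun t v => by
      show (inner ℝ (t • v) (A (t • v)) : ℝ) = _
      rw [A.map_smul, real_inner_smul_left, real_inner_smul_right]
      ring)
    hhess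
  -- radius r₁ : Hessian lower bound
  have hfc : ContinuousAt (fun x => fderiv ℝ (gradient H) x) xbar :=
    (hgrad1.continuous_fderiv one_ne_zero).continuousAt
  rw [Metric.continuousAt_iff] at hfc
  obtain ⟨r₁, hr₁, hr₁p⟩ := hfc (cH/2) (by linarith)
  have hhessball : ∀ y ∈ ball xbar r₁, ∀ v : EuclideanSpace ℝ (Fin n),
      (cH/2) * ‖v‖ ^ 2 ≤ (inner ℝ v (fderiv ℝ (gradient H) y v) : ℝ) := by
    intro y hy v
    have hd := hr₁p (mem_ball.mp hy)
    rw [dist_eq_norm] at hd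
    set B := fderiv ℝ (gradient H) y with hB
    have h2 : (inner ℝ v (A v) : ℝ) - (inner ℝ v (B v) : ℝ) = (inner ℝ v ((A - B) v) : ℝ) := by
      rw [← inner_sub_right, ContinuousLinearMap.sub_apply]
    have h3 : (inner ℝ v ((A - B) v) : ℝ) ≤ ‖v‖ * ‖(A - B) v‖ := real_inner_le_norm _ _
    have h4 : ‖(A - B) v‖ ≤ ‖A - B‖ * ‖v‖ := (A - B).le_opNorm v
    have h5 := hcHle v
    have h6 : ‖A - B‖ < cH/2 := by rwa [norm_sub_rev] at hd
    have h7 : ‖v‖ ^ 2 = ‖v‖ * ‖v‖ := sq ‖v‖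
    nlinarith [norm_nonneg v, norm_nonneg (A - B), sq_nonneg ‖v‖]
  -- strong monotonicity on ball r₁
  have hmono : ∀ x ∈ ball xbar r₁,
      (cH/2) * ‖x - xbar‖ ^ 2 ≤ (inner ℝ (gradient H x - b) (x - xbar) : ℝ) :=
    fun x hx => grad_strong_mono (gradient H) hgdiff xbar r₁ (cH/2) hhessball x hx
  have hepos : ∀ x ∈ ball xbar r₁, x ≠ xbar → gradient H x ≠ b := by
    intro x hx hne hcon
    have h1 := hmono x hx
    rw [hcon, sub_self, inner_zero_left] at h1
    have h2 : 0 < ‖x - xbar‖ := norm_pos_iff.mpr (sub_ne_zero_of_ne hne)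
    have h3 := mul_pos (show (0:ℝ) < cH/2 by linarith) (pow_pos h2 2)
    linarith
  have hSpos1 : ∀ x ∈ ball xbar r₁, x ≠ xbar → 0 < S x := by
    intro x hx hne
    have h1 := S_pos_aux S (fun y => gradient H y - b) hSgrad xbar r₁ (cH/2)
      (by linarith) (fun y hy => by simpa using hmono y hy) (by simp [hb]) x hx hne
    rwa [hS0] at h1
  -- matrix coercivity
  set N := R + G xbar * Matrix.diagonal ubar * G xbar with hN
  obtain ⟨cN, hcN, hcNle⟩ := aux_coercive
    (fun v : EuclideanSpace ℝ (Fin n) => (fun j => v j) ⬝ᵥ (N *ᵥ fun j => v j))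
    (by
      simp only [dotProduct, Matrix.mulVec]
      exact continuous_finset_sum _ (fun i _ =>
        ((EuclideanSpace.proj i).continuous).mul (continuous_finset_sum _ (fun j _ =>
          continuous_const.mul (EuclideanSpace.proj j).continuous))))
    (by
      intro t v
      have hsm : ∀ j, (t • v) j = t * v j := fun j => rfl
      simp only [Matrix.mulVec, dotProduct, hsm]
      rw [Finset.mul_sum]
      apply Finset.sum_congr rfl
      intro i _
      have h2 : ∑ j, N i j * (t * v j) = t * ∑ j, N i j * v j := by
        rw [Finset.mul_sum]
        apply Finset.sum_congr rfl
        intro j _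
        ring
      rw [h2]
      ring)
    (by
      intro v hv
      have hv' : (fun j => v j) ≠ 0 := by
        intro h
        apply hv
        ext i
        exact congrFun h i
      have := hZpos.dotProduct_mulVec_pos hv'
      simpa using this)
  -- the perturbation functions
  set w : EuclideanSpace ℝ (Fin n) → Fin n → ℝ :=
    fun x i => (if i ∈ I then 0 else (gradient H x i)⁻¹) * ubar i
      * (if i ∈ I then 0 else (b i)⁻¹) with hw
  -- eventual bounds near xbar
  have hev1 : ∀ᶠ x in nhds xbar, ∀ i, i ∉ I → 0 < gradient H x i := by
    rw [Filter.eventually_all]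
    intro i
    by_cases hi : i ∈ I
    · exact Filter.Eventually.of_forall (fun x h => absurd hi h)
    · have h2 := (hproj i).continuousAt (Ioi_mem_nhds (hxbar i hi))
      filter_upwards [h2] with x hx _
      exact hx
  have hev2 : ∀ᶠ x in nhds xbar, ∀ i, |w x i - w xbar i| ≤ cN/2 := by
    rw [Filter.eventually_all]
    intro i
    by_cases hi : i ∈ I
    · apply Filter.Eventually.of_forall
      intro x
      simp only [hw, if_pos hi]
      simp
      linarith
    · have hbne : b i ≠ 0 := ne_of_gt (hxbar i hi)
      have h1 : ContinuousAt (fun x : EuclideanSpace ℝ (Fin n) => w x i) xbar := by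
        simp only [hw, if_neg hi]
        exact (((hproj i).continuousAt.inv₀ hbne).mul continuousAt_const).mul
          continuousAt_const
      have h2 := h1 (Metric.ball_mem_nhds (w xbar i) (show (0:ℝ) < cN/2 by linarith))
      filter_upwards [h2] with x hx
      rw [Set.mem_preimage, mem_ball, Real.dist_eq] at hx
      exact hx.le
  rcases Metric.eventually_nhds_iff_ball.mp (hev1.and hev2) with ⟨r₂, hr₂, hr₂p⟩
  -- radius r
  have hminpos : 0 < min r₁ r₂ := lt_min hr₁ hr₂
  set r := min r₁ r₂ / 2 with hrdef
  have hrpos : 0 < r := by positivity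
  have hsub : closedBall xbar r ⊆ ball xbar (min r₁ r₂) := by
    intro x hx
    rw [mem_closedBall] at hx
    rw [mem_ball]
    have : r < min r₁ r₂ := by rw [hrdef]; linarith
    linarith
  have hsub1 : closedBall xbar r ⊆ ball xbar r₁ :=
    fun x hx => mem_ball.mpr (lt_of_lt_of_le (mem_ball.mp (hsub hx)) (min_le_left _ _))
  have hsub2 : closedBall xbar r ⊆ ball xbar r₂ :=
    fun x hx => mem_ball.mpr (lt_of_lt_of_le (mem_ball.mp (hsub hx)) (min_le_right _ _))
  -- the shifted gradient coordinates
  set e : EuclideanSpace ℝ (Fin n) → Fin n → ℝ :=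
    fun x j => gradient H x j - b j with he
  -- the key identity for the derivative of S along F
  have hDeq : ∀ x : EuclideanSpace ℝ (Fin n), (∀ i, i ∉ I → 0 < gradient H x i) →
      (inner ℝ (gradient S x) (F x) : ℝ)
        = -((e x) ⬝ᵥ (R *ᵥ (e x)) + ∑ i, w x i * (e x i) ^ 2) := by
    intro x hpos
    have ha : (fun j => gradient H x j) = (fun j => e x j) + (fun j => b j) := by
      funext j
      simp [he]
    have hFx : ∀ i, F x i = ((J - R) *ᵥ (fun j => e x j)) i
        + ((J - R) *ᵥ (fun j => b j)) i + (G x *ᵥ ubar) i := by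
      intro i
      rw [hF x]
      show ((J - R) *ᵥ (fun j => gradient H x j) + G x *ᵥ ubar) i = _
      rw [ha, Matrix.mulVec_add]
      simp only [Pi.add_apply]
      all_goals ring
    have heqb : ∀ i, ((J - R) *ᵥ (fun j => b j)) i = -((G xbar *ᵥ ubar) i) := by
      intro i
      have h1 := congrFun (hF xbar) i
      rw [heq] at h1
      have h2 : (0 : EuclideanSpace ℝ (Fin n)) i = 0 := rfl
      rw [h2] at h1
      have h3 : (fun j => gradient H xbar j) = (fun j => b j) := by
        funext j
        rw [hb]
      rw [h3] at h1
      have h4 : ((J - R) *ᵥ fun j => b j) i + (G xbar *ᵥ ubar) i = 0 := by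
        rw [← Pi.add_apply]
        exact h1.symm
      linarith
    have hsplit : ∀ i, e x i * F x i
        = e x i * (J *ᵥ fun j => e x j) i - e x i * (R *ᵥ fun j => e x j) i
          + (-(w x i * e x i ^ 2)) := by
      intro i
      have h2 : ((J - R) *ᵥ (fun j => e x j)) i
          = (J *ᵥ fun j => e x j) i - (R *ᵥ fun j => e x j) i := by
        rw [Matrix.sub_mulVec, Pi.sub_apply]
      have h3 : e x i * ((J - R) *ᵥ (fun j => b j)) i + e x i * (G x *ᵥ ubar) i
          = -(w x i * e x i ^ 2) := by
        rw [heqb i, hG x, hG xbar, Matrix.mulVec_diagonal, Matrix.mulVec_diagonal]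
        by_cases hi : i ∈ I
        · simp [hw, if_pos hi]
        · have hai : gradient H x i ≠ 0 := ne_of_gt (hpos i hi)
          have hbi : b i ≠ 0 := ne_of_gt (hxbar i hi)
          have hbeq : gradient H xbar i = b i := by rw [hb]
          rw [hbeq]
          simp only [hw, if_neg hi, he]
          field_simp
          ring
      rw [hFx i, h2]
      linear_combination h3
    calc (inner ℝ (gradient S x) (F x) : ℝ) = ∑ i, e x i * F x i := by
          rw [hSg x, hinner]
          apply Finset.sum_congr rfl
          intro i _
          rfl
      _ = ∑ i, (e x i * (J *ᵥ fun j => e x j) i - e x i * (R *ᵥ fun j => e x j) i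
            + (-(w x i * e x i ^ 2))) := Finset.sum_congr rfl (fun i _ => hsplit i)
      _ = (fun j => e x j) ⬝ᵥ (J *ᵥ fun j => e x j)
            - (fun j => e x j) ⬝ᵥ (R *ᵥ fun j => e x j)
            + ∑ i, (-(w x i * e x i ^ 2)) := by
          rw [Finset.sum_add_distrib, Finset.sum_sub_distrib]
          rfl
      _ = -((e x) ⬝ᵥ (R *ᵥ (e x)) + ∑ i, w x i * (e x i) ^ 2) := by
          rw [skew_quad_zero J hJ, Finset.sum_neg_distrib]
          ring
  -- quadratic lower bound on the closed ball
  have hquad : ∀ x ∈ closedBall xbar r, ∀ v : Fin n → ℝ,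
      (cN/2) * (∑ i, v i ^ 2) ≤ v ⬝ᵥ (R *ᵥ v) + ∑ i, w x i * v i ^ 2 := by
    intro x hx v
    obtain ⟨hpos, hwb⟩ := hr₂p _ (hsub2 hx)
    have hNsplit : v ⬝ᵥ (N *ᵥ v) = v ⬝ᵥ (R *ᵥ v) + ∑ i, w xbar i * v i ^ 2 := by
      rw [hN, Matrix.add_mulVec, dotProduct_add]
      congr 1
      rw [hG xbar, Matrix.diagonal_mul_diagonal, Matrix.diagonal_mul_diagonal]
      have hbeq : ∀ i, gradient H xbar i = b i := fun i => by rw [hb]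
      simp only [dotProduct, Matrix.mulVec_diagonal, hw, hbeq]
      all_goals
        apply Finset.sum_congr rfl
        intro i _
        ring
    have h1 : cN * ∑ i, v i ^ 2 ≤ v ⬝ᵥ (N *ᵥ v) := by
      have h2 := hcNle (WithLp.toLp 2 v)
      rw [hnormsq] at h2
      exact h2
    have h3 : ∀ i ∈ Finset.univ, -(cN/2 * v i ^ 2) ≤ (w x i - w xbar i) * v i ^ 2 := by
      intro i _
      have h4 := hwb i
      have h5 := abs_le.mp h4
      nlinarith [sq_nonneg (v i)]
    have h6 := Finset.sum_le_sum h3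
    rw [Finset.sum_neg_distrib, ← Finset.mul_sum] at h6
    have h7 : ∑ i, (w x i - w xbar i) * v i ^ 2
        = ∑ i, w x i * v i ^ 2 - ∑ i, w xbar i * v i ^ 2 := by
      rw [← Finset.sum_sub_distrib]
      apply Finset.sum_congr rfl
      intro i _
      ring
    rw [h7] at h6
    linarith
  -- negativity of D on the closed ball
  have hDneg : ∀ x ∈ closedBall xbar r, x ≠ xbar →
      (inner ℝ (gradient S x) (F x) : ℝ) < 0 := by
    intro x hx hne
    obtain ⟨hpos, hwb⟩ := hr₂p _ (hsub2 hx)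
    rw [hDeq x hpos]
    have h1 := hquad x hx (e x)
    have h2 : 0 < ∑ i, e x i ^ 2 := by
      have hne2 : gradient H x ≠ b := hepos x (hsub1 hx) hne
      have h3 : ∃ i, e x i ≠ 0 := by
        by_contra hcon
        push_neg at hcon
        apply hne2
        ext i
        have := hcon i
        simp only [he] at this
        linarith
      obtain ⟨i, hi⟩ := h3
      exact Finset.sum_pos' (fun j _ => sq_nonneg _)
        ⟨i, Finset.mem_univ i, by positivity⟩
    have h4 : 0 < cN/2 * ∑ i, e x i ^ 2 := by positivity
    linarith
  have hD0 : (inner ℝ (gradient S xbar) (F xbar) : ℝ) = 0 := by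
    rw [hSg xbar, ← hb, sub_self, inner_zero_left]
  -- S positivity on the closed ball
  have hSposCB : ∀ x ∈ closedBall xbar r, x ≠ xbar → 0 < S x :=
    fun x hx hne => hSpos1 x (hsub1 hx) hne
  -- D and its continuity
  set D : EuclideanSpace ℝ (Fin n) → ℝ := fun x => (inner ℝ (gradient S x) (F x) : ℝ) with hD
  have hDcont : ContinuousOn D (closedBall xbar r) := by
    have hecont : ∀ i, Continuous fun x : EuclideanSpace ℝ (Fin n) => e x i := by
      intro i
      simp only [he]
      exact (hproj i).sub continuous_const
    have hcont2 : ContinuousOn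
        (fun x : EuclideanSpace ℝ (Fin n) =>
          -((e x) ⬝ᵥ (R *ᵥ (e x)) + ∑ i, w x i * (e x i) ^ 2))
        (closedBall xbar r) := by
      apply ContinuousOn.neg
      apply ContinuousOn.add
      · apply Continuous.continuousOn
        simp only [dotProduct, Matrix.mulVec]
        exact continuous_finset_sum _ (fun i _ => (hecont i).mul
          (continuous_finset_sum _ (fun j _ => continuous_const.mul (hecont j))))
      · apply continuousOn_finset_sum
        intro i _
        apply ContinuousOn.mul
        · by_cases hi : i ∈ I
          · have h1 : (fun x : EuclideanSpace ℝ (Fin n) => w x i) = fun _ => 0 := by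
              funext x
              simp [hw, if_pos hi]
            rw [h1]
            exact continuousOn_const
          · simp only [hw, if_neg hi]
            apply ContinuousOn.mul (ContinuousOn.mul ?_ continuousOn_const) continuousOn_const
            apply ContinuousOn.inv₀ ((hproj i).continuousOn)
            intro x hx
            exact ne_of_gt ((hr₂p _ (hsub2 hx)).1 i hi)
        · exact ((hecont i).pow 2).continuousOn
    exact hcont2.congr (fun x hx => hDeq x (hr₂p _ (hsub2 hx)).1)
  have hDle : ∀ x ∈ closedBall xbar r, D x ≤ 0 := by
    intro x hx
    rcases eq_or_ne x xbar with rfl | hne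
    · exact le_of_eq hD0
    · exact (hDneg x hx hne).le
  -- chain rule
  have hchain : ∀ (γ : ℝ → EuclideanSpace ℝ (Fin n)) (t : ℝ), HasDerivAt γ (F (γ t)) t →
      HasDerivAt (fun s => S (γ s)) (D (γ t)) t := by
    intro γ t hγ
    have h1 := (hSgrad (γ t)).hasFDerivAt.comp_hasDerivAt t hγ
    have h2 : D (γ t) = (inner ℝ (gradient H (γ t) - b) (F (γ t)) : ℝ) := by
      rw [hD]
      show (inner ℝ (gradient S (γ t)) (F (γ t)) : ℝ) = _
      rw [hSg (γ t)]
    rw [h2]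
    have h3 : (inner ℝ (gradient H (γ t) - b) (F (γ t)) : ℝ)
        = (InnerProductSpace.toDual ℝ (EuclideanSpace ℝ (Fin n))) (gradient H (γ t) - b) (F (γ t)) :=
      (InnerProductSpace.toDual_apply_apply).symm
    rw [h3]
    exact h1
  -- assemble the three conclusions
  refine ⟨⟨r, hrpos, fun x hx hne => ⟨hSpos1 x (hsub1 (ball_subset_closedBall hx)) hne,
      hDneg x (ball_subset_closedBall hx) hne⟩⟩, ?_, ?_⟩
  · -- stability
    intro ε hε
    have hminp : 0 < min ε r := lt_min hε hrpos
    obtain ⟨δ, hδ, _, hinv⟩ := lyap_core xbar S D r hScont hS0 hSposCB hDle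
      (min ε r) hminp (min_le_right _ _)
    refine ⟨δ, hδ, fun γ hγ hγ0 t ht => ?_⟩
    have h1 := hinv γ (fun s hs => (hγ s hs).continuousAt)
      (fun s hs => hchain γ s (hγ s hs)) hγ0 t ht
    exact mem_ball.mpr (lt_of_lt_of_le (mem_ball.mp h1) (min_le_left _ _))
  · -- attractivity
    obtain ⟨δ, hδ, hatt⟩ := lyap_attract xbar S D r hrpos hScont hS0 hSposCB
      hDcont hDneg hD0
    exact ⟨δ, hδ, fun γ hγ hγ0 => hatt γ (fun s hs => (hγ s hs).continuousAt)
      (fun s hs => hchain γ s (hγ s hs)) hγ0⟩
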